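/- There exists a crowded, Hausdorff, zerodimensional topology τ on ω together with a closed filter F on (ω, τ) which is strongly remote: for every A ⊆ ω with empty τ-interior, there is F' ∈ F disjoint from A. -/

import Mathlib

noncomputable section
namespace SRF
open Set
open scoped Classical

/-- point decoding: each natural codes a pair (finite set, finite family of finite sets) -/
def pt : ℕ ≃ Finset ℕ × Finset (Finset ℕ) :=
  ((Denumerable.ofEncodableOfInfinite (Finset ℕ × Finset (Finset ℕ))).eqv).symm

open scoped Classical in
/-- the Hausdorff independent family on ℕ, indexed by `Set ℕ` -/
def E (σ : Set ℕ) : Set ℕ := {n | (pt n).1.filter (· ∈ σ) ∈ (pt n).2}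

open scoped Classical in
/-- witnesses that two distinct sets differ -/
def wit (σ σ' : Set ℕ) : ℕ :=
  if h : (symmDiff σ σ').Nonempty then h.choose else 0

lemma wit_mem {σ σ' : Set ℕ} (h : σ ≠ σ') : wit σ σ' ∈ symmDiff σ σ' := by
  classical
  have hne : (symmDiff σ σ').Nonempty := by
    rw [Set.nonempty_iff_ne_empty]
    intro hc
    exact h (by simpa [Set.symmDiff_eq_empty] using hc)
  rw [wit, dif_pos hne]
  exact hne.choose_spec

/-- independence: every finite boolean combination over distinct indices is infinite -/
lemma indepE (P N : Finset (Set ℕ)) (hPN : ∀ σ ∈ P, ∀ σ' ∈ N, σ ≠ σ') :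
    ((⋂ σ ∈ P, E σ) ∩ ⋂ σ ∈ N, (E σ)ᶜ).Infinite := by
  classical
  set F₀ : Finset ℕ := P.biUnion (fun σ => N.image (fun σ' => wit σ σ')) with hF₀
  set M : ℕ := (F₀.sup id) + 1 with hM
  have hMgt : ∀ m ∈ F₀, m < M := fun m hm =>
    Nat.lt_succ_of_le (Finset.le_sup (f := id) hm)
  set Fk : ℕ → Finset ℕ := fun k => insert (M + k) F₀ with hFk
  set Fam : ℕ → Finset (Finset ℕ) := fun k => P.image (fun σ => (Fk k).filter (· ∈ σ)) with hFam
  set q : ℕ → ℕ := fun k => pt.symm (Fk k, Fam k) with hq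
  have hqinj : Function.Injective q := by
    intro k j hkj
    have h1 : (Fk k, Fam k) = (Fk j, Fam j) := pt.symm.injective hkj
    have h2 : Fk k = Fk j := congrArg Prod.fst h1
    have h3 : M + k ∈ Fk j := h2 ▸ Finset.mem_insert_self _ _
    rcases Finset.mem_insert.1 h3 with h | h
    · omega
    · exact absurd (hMgt _ h) (by omega)
  apply Set.infinite_of_injective_forall_mem (f := q) hqinj
  intro k
  have hpt : pt (q k) = (Fk k, Fam k) := by simp [hq]
  constructor
  · simp only [Set.mem_iInter]
    intro σ hσ
    show (pt (q k)).1.filter (· ∈ σ) ∈ (pt (q k)).2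
    rw [hpt]
    exact Finset.mem_image.2 ⟨σ, hσ, rfl⟩
  · simp only [Set.mem_iInter]
    intro σ' hσ'
    intro hmem
    have : (pt (q k)).1.filter (· ∈ σ') ∈ (pt (q k)).2 := hmem
    rw [hpt] at this
    rcases Finset.mem_image.1 this with ⟨σ, hσ, heq⟩
    have hne : σ ≠ σ' := hPN σ hσ σ' hσ'
    have hw : wit σ σ' ∈ symmDiff σ σ' := wit_mem hne
    have hwF : wit σ σ' ∈ Fk k := by
      apply Finset.mem_insert_of_mem
      exact Finset.mem_biUnion.2 ⟨σ, hσ, Finset.mem_image.2 ⟨σ', hσ', rfl⟩⟩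
    have := Finset.ext_iff.1 heq (wit σ σ')
    simp only [Finset.mem_filter] at this
    rw [Set.mem_symmDiff] at hw
    rcases hw with ⟨h1, h2⟩ | ⟨h1, h2⟩
    · exact h2 (this.1 ⟨hwF, h1⟩).2
    · exact h2 (this.2 ⟨hwF, h1⟩).2



-- ## Part 2


def pr : ℕ ≃ ℕ × ℕ := ((Denumerable.ofEncodableOfInfinite (ℕ × ℕ)).eqv).symm

def sk (k : ℕ) : Set ℕ := {0, k+1}

def D (k : ℕ) : Set ℕ := insert (pr k).1 (E (sk k) \ {(pr k).2})

def R : Set (Set ℕ) := {σ | 0 ∉ σ}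

def bG : Set (Set ℕ) := {s | ∃ k, s = D k ∨ s = (D k)ᶜ}

lemma sep (n m : ℕ) (h : n ≠ m) : ∃ k, n ∈ D k ∧ m ∉ D k := by
  refine ⟨pr.symm (n, m), ?_, ?_⟩
  · simp [D]
  · intro hc
    rcases Set.mem_insert_iff.1 hc with hc | hc
    · simp only [Equiv.apply_symm_apply] at hc
      exact h hc.symm
    · simp only [D, Equiv.apply_symm_apply] at hc
      exact hc.2 rfl

lemma sk_inj : Function.Injective sk := by
  intro a b hab
  have : (a+1 : ℕ) ∈ sk b := hab ▸ (by simp [sk])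
  simpa [sk] using this

lemma sk_not_R (k : ℕ) : sk k ∉ R := by simp [sk, R]

/-- the main base combinatorial lemma -/
lemma baseCombo (gp gn : Finset ℕ) (P N : Finset (Set ℕ))
    (hgpn : Disjoint gp gn) (hP : ↑P ⊆ R) (hN : ↑N ⊆ R)
    (hPN : Disjoint P N) :
    ((⋂ k ∈ gp, D k) ∩ (⋂ k ∈ gn, (D k)ᶜ) ∩
      ((⋂ σ ∈ P, E σ) ∩ ⋂ σ ∈ N, (E σ)ᶜ)).Infinite := by
  classical
  set P' : Finset (Set ℕ) := gp.image sk ∪ P with hP'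
  set N' : Finset (Set ℕ) := gn.image sk ∪ N with hN'
  have hdist : ∀ σ ∈ P', ∀ σ' ∈ N', σ ≠ σ' := by
    intro σ hσ σ' hσ'
    rcases Finset.mem_union.1 hσ with h1 | h1 <;>
      rcases Finset.mem_union.1 hσ' with h2 | h2
    · rcases Finset.mem_image.1 h1 with ⟨k, hk, rfl⟩
      rcases Finset.mem_image.1 h2 with ⟨k', hk', rfl⟩
      intro hc
      exact (Finset.disjoint_left.1 hgpn hk) (sk_inj hc ▸ hk')
    · rcases Finset.mem_image.1 h1 with ⟨k, hk, rfl⟩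
      intro hc; exact sk_not_R k (hc ▸ hN h2)
    · rcases Finset.mem_image.1 h2 with ⟨k', hk', rfl⟩
      intro hc; exact sk_not_R k' (hc.symm ▸ hP h1)
    · intro hc; exact (Finset.disjoint_left.1 hPN h1) (hc ▸ h2)
  have hpure := indepE P' N' hdist
  set J : Finset ℕ := (gp ∪ gn).biUnion (fun k => {(pr k).1, (pr k).2}) with hJ
  have : (((⋂ σ ∈ P', E σ) ∩ ⋂ σ ∈ N', (E σ)ᶜ) \ ↑J) ⊆
      ((⋂ k ∈ gp, D k) ∩ (⋂ k ∈ gn, (D k)ᶜ) ∩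
        ((⋂ σ ∈ P, E σ) ∩ ⋂ σ ∈ N, (E σ)ᶜ)) := by
    rintro n ⟨⟨h1, h2⟩, h3⟩
    simp only [Set.mem_iInter] at h1 h2
    have hnJ : ∀ k ∈ gp ∪ gn, n ≠ (pr k).1 ∧ n ≠ (pr k).2 := by
      intro k hk
      constructor
      · intro hc; apply h3; rw [hc]
        exact Finset.mem_coe.2 (Finset.mem_biUnion.2 ⟨k, hk, by simp⟩)
      · intro hc; apply h3; rw [hc]
        exact Finset.mem_coe.2 (Finset.mem_biUnion.2 ⟨k, hk, by simp⟩)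
    refine ⟨⟨?_, ?_⟩, ?_, ?_⟩
    · simp only [Set.mem_iInter]
      intro k hk
      have hE : n ∈ E (sk k) := h1 _ (Finset.mem_union_left _ (Finset.mem_image_of_mem _ hk))
      exact Set.mem_insert_of_mem _ ⟨hE, (hnJ k (Finset.mem_union_left _ hk)).2⟩
    · simp only [Set.mem_iInter]
      intro k hk
      have hE : n ∉ E (sk k) := h2 _ (Finset.mem_union_left _ (Finset.mem_image_of_mem _ hk))
      intro hc
      rcases Set.mem_insert_iff.1 hc with hc | hc
      · exact (hnJ k (Finset.mem_union_right _ hk)).1 hc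
      · exact hE hc.1
    · simp only [Set.mem_iInter]
      intro σ hσ; exact h1 _ (Finset.mem_union_right _ hσ)
    · simp only [Set.mem_iInter]
      intro σ hσ; exact h2 _ (Finset.mem_union_right _ hσ)
  exact Set.Infinite.mono this (hpure.diff (J.finite_toSet))


-- ## Part 3 : terms

structure Tm where
  g : Finset (Set ℕ)
  P : Finset (Set ℕ)
  N : Finset (Set ℕ)

def val0 (g : Finset (Set ℕ)) : Set ℕ := ⋂ ℓ ∈ g, ℓ

def epart (t : Tm) : Set ℕ := (⋂ σ ∈ t.P, E σ) ∩ ⋂ σ ∈ t.N, (E σ)ᶜ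

def val (t : Tm) : Set ℕ := val0 t.g ∩ epart t

lemma val0_insert (ℓ : Set ℕ) (g : Finset (Set ℕ)) :
    val0 (insert ℓ g) = ℓ ∩ val0 g := by
  simp [val0, Set.biInter_insert]

lemma val0_mono {g : Finset (Set ℕ)} {ℓ : Set ℕ} (h : ℓ ∈ g) : val0 g ⊆ ℓ := by
  intro n hn
  simp only [val0, Set.mem_iInter] at hn
  exact hn ℓ h

def mrg (t₁ t₂ : Tm) : Tm := ⟨t₁.g ∪ t₂.g, t₁.P ∪ t₂.P, t₁.N ∪ t₂.N⟩

lemma val_mrg (t₁ t₂ : Tm) : val (mrg t₁ t₂) = val t₁ ∩ val t₂ := by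
  ext n
  simp only [val, val0, epart, mrg, Set.mem_inter_iff, Set.mem_iInter,
    Finset.mem_union, Set.mem_compl_iff]
  constructor
  · rintro ⟨h1, h2, h3⟩
    exact ⟨⟨fun ℓ hℓ => h1 ℓ (Or.inl hℓ), fun σ hσ => h2 σ (Or.inl hσ),
        fun σ hσ => h3 σ (Or.inl hσ)⟩,
      ⟨fun ℓ hℓ => h1 ℓ (Or.inr hℓ), fun σ hσ => h2 σ (Or.inr hσ),
        fun σ hσ => h3 σ (Or.inr hσ)⟩⟩
  · rintro ⟨⟨h1, h2, h3⟩, h4, h5, h6⟩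
    exact ⟨fun ℓ hℓ => hℓ.elim (h1 ℓ) (h4 ℓ), fun σ hσ => hσ.elim (h2 σ) (h5 σ),
      fun σ hσ => hσ.elim (h3 σ) (h6 σ)⟩

lemma val_insertP (g P N : Finset (Set ℕ)) (σ : Set ℕ) :
    val ⟨g, insert σ P, N⟩ = E σ ∩ val ⟨g, P, N⟩ := by
  ext n
  simp only [val, val0, epart, Set.mem_inter_iff, Set.mem_iInter,
    Finset.mem_insert, Set.mem_compl_iff]
  constructor
  · rintro ⟨h1, h2, h3⟩
    exact ⟨h2 σ (Or.inl rfl), h1, fun σ' hσ' => h2 σ' (Or.inr hσ'), h3⟩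
  · rintro ⟨h0, h1, h2, h3⟩
    exact ⟨h1, fun σ' hσ' => hσ'.elim (fun h => h ▸ h0) (h2 σ'), h3⟩

lemma val_insertN (g P N : Finset (Set ℕ)) (σ : Set ℕ) :
    val ⟨g, P, insert σ N⟩ = (E σ)ᶜ ∩ val ⟨g, P, N⟩ := by
  ext n
  simp only [val, val0, epart, Set.mem_inter_iff, Set.mem_iInter,
    Finset.mem_insert, Set.mem_compl_iff]
  constructor
  · rintro ⟨h1, h2, h3⟩
    exact ⟨h3 σ (Or.inl rfl), h1, h2, fun σ' hσ' => h3 σ' (Or.inr hσ')⟩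
  · rintro ⟨h0, h1, h2, h3⟩
    exact ⟨h1, h2, fun σ' hσ' => hσ'.elim (fun h => h ▸ h0) (h3 σ')⟩

lemma val_insertG (g P N : Finset (Set ℕ)) (ℓ : Set ℕ) :
    val ⟨insert ℓ g, P, N⟩ = ℓ ∩ val ⟨g, P, N⟩ := by
  show val0 (insert ℓ g) ∩ _ = _
  rw [val0_insert]
  exact Set.inter_assoc _ _ _

/-- structure of base conjunctions -/
lemma base_structure (g : Finset (Set ℕ)) (hg : ↑g ⊆ bG) :
    val0 g = ∅ ∨ ∃ gp gn : Finset ℕ, Disjoint gp gn ∧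
      val0 g = (⋂ k ∈ gp, D k) ∩ (⋂ k ∈ gn, (D k)ᶜ) := by
  classical
  induction g using Finset.induction_on with
  | empty =>
    right; exact ⟨∅, ∅, by simp, by simp [val0]⟩
  | @insert ℓ g hℓg IH =>
    have hgsub : ↑g ⊆ bG := fun x hx => hg (Finset.mem_coe.2 (Finset.mem_insert_of_mem hx))
    have hℓ : ℓ ∈ bG := hg (Finset.mem_coe.2 (Finset.mem_insert_self _ _))
    rcases IH hgsub with h | ⟨gp, gn, hd, heq⟩
    · left
      rw [val0_insert, h, Set.inter_empty]
    · rcases hℓ with ⟨k, hk | hk⟩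
      · by_cases hkgn : k ∈ gn
        · left
          rw [val0_insert, heq, hk]
          ext n
          simp only [Set.mem_inter_iff, Set.mem_iInter, Set.mem_empty_iff_false,
            iff_false, Set.mem_compl_iff, not_and]
          rintro h1 h2 h3
          exact h3 k hkgn h1
        · right
          refine ⟨insert k gp, gn, ?_, ?_⟩
          · rw [Finset.disjoint_left]
            intro a ha
            rcases Finset.mem_insert.1 ha with rfl | ha
            · exact hkgn
            · exact Finset.disjoint_left.1 hd ha
          · rw [val0_insert, heq, hk]
            rw [Finset.set_biInter_insert, Set.inter_assoc]
      · by_cases hkgp : k ∈ gp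
        · left
          rw [val0_insert, heq, hk]
          ext n
          simp only [Set.mem_inter_iff, Set.mem_iInter, Set.mem_empty_iff_false,
            iff_false, Set.mem_compl_iff, not_and]
          rintro h1 h2 h3
          exact h1 (h2 k hkgp)
        · right
          refine ⟨gp, insert k gn, ?_, ?_⟩
          · rw [Finset.disjoint_right]
            intro a ha
            rcases Finset.mem_insert.1 ha with rfl | ha
            · exact hkgp
            · exact Finset.disjoint_right.1 hd ha
          · rw [val0_insert, heq, hk]
            rw [Finset.set_biInter_insert]
            ext n
            simp only [Set.mem_inter_iff, Set.mem_iInter, Set.mem_compl_iff]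
            tauto

/-- base case of the invariants -/
lemma base_main (t : Tm) (hg : ↑t.g ⊆ bG) (hP : ↑t.P ⊆ R) (hN : ↑t.N ⊆ R)
    (hPN : Disjoint t.P t.N) :
    val0 t.g = ∅ ∨ (val t).Infinite := by
  rcases base_structure t.g hg with h | ⟨gp, gn, hd, heq⟩
  · exact Or.inl h
  · right
    have := baseCombo gp gn t.P t.N hd hP hN hPN
    rw [val, heq]
    exact this

lemma disj_of_nonempty (t : Tm) (h : (val t).Nonempty) : Disjoint t.P t.N := by
  rw [Finset.disjoint_left]
  intro σ h1 h2
  rcases h with ⟨n, -, hn2, hn3⟩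
  simp only [Set.mem_iInter] at hn2 hn3
  exact (hn3 σ h2) (hn2 σ h1)

/-- separating a point from a finite set by a base conjunction -/
lemma sepCombo (z : ℕ) (S : Finset ℕ) (hz : z ∉ S) :
    ∃ gV : Finset (Set ℕ), ↑gV ⊆ bG ∧ z ∈ val0 gV ∧ val0 gV ∩ ↑S = ∅ := by
  classical
  induction S using Finset.induction_on with
  | empty => exact ⟨∅, by simp, by simp [val0], by simp⟩
  | @insert y S hyS IH =>
    have hzy : z ≠ y := fun hc => hz (hc ▸ Finset.mem_insert_self _ _)
    have hzS : z ∉ S := fun hc => hz (Finset.mem_insert_of_mem hc)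
    rcases IH hzS with ⟨gV, hsub, hzin, hint⟩
    rcases sep z y hzy with ⟨k, hzk, hyk⟩
    refine ⟨insert (D k) gV, ?_, ?_, ?_⟩
    · intro x hx
      rcases Finset.mem_insert.1 hx with rfl | hx
      · exact ⟨k, Or.inl rfl⟩
      · exact hsub hx
    · rw [val0_insert]; exact ⟨hzk, hzin⟩
    · rw [val0_insert]
      ext n
      simp only [Set.mem_inter_iff, Finset.coe_insert, Set.mem_insert_iff,
        Set.mem_empty_iff_false, iff_false, not_and, Finset.mem_coe]
      rintro ⟨hn1, hn2⟩ (rfl | hnS)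
      · exact hyk hn1
      · exact (Set.eq_empty_iff_forall_notMem.1 hint n) ⟨hn2, hnS⟩


-- ## Part 4 : the transfinite recursion

def cc : Cardinal := Cardinal.mk (Set ℕ)

def W : Type := cc.ord.ToType

instance : LinearOrder W := inferInstanceAs (LinearOrder cc.ord.ToType)
instance : WellFoundedLT W := inferInstanceAs (WellFoundedLT cc.ord.ToType)

def eqW : Set ℕ ≃ W :=
  Classical.choice (Cardinal.eq.1 (Cardinal.mk_ord_toType cc).symm)

def rlt (a b : Set ℕ) : Prop := eqW a < eqW b

lemma rlt_wf : WellFounded rlt := InvImage.wf eqW (wellFounded_lt (α := W))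

lemma rlt_trans {a b c : Set ℕ} (h1 : rlt a b) (h2 : rlt b c) : rlt a c :=
  lt_trans h1 h2

lemma exists_rmax (Γ : Finset (Set ℕ)) (h : Γ.Nonempty) :
    ∃ B ∈ Γ, ∀ B' ∈ Γ, B' = B ∨ rlt B' B := by
  rcases Finset.exists_max_image Γ eqW h with ⟨B, hB, hmax⟩
  refine ⟨B, hB, fun B' hB' => ?_⟩
  rcases lt_or_eq_of_le (hmax B' hB') with h | h
  · exact Or.inr h
  · exact Or.inl (eqW.injective h)

lemma card_small (A : Set ℕ) : Cardinal.mk {B : Set ℕ // rlt B A} < cc := by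
  have hinj : Function.Injective
      (fun B : {B : Set ℕ // rlt B A} => (⟨eqW B.1, B.2⟩ : Set.Iio (eqW A))) := by
    intro B B' h
    apply Subtype.ext
    apply eqW.injective
    exact congrArg Subtype.val h
  calc Cardinal.mk {B : Set ℕ // rlt B A} ≤ Cardinal.mk (Set.Iio (eqW A)) :=
        Cardinal.mk_le_of_injective hinj
    _ < cc := Cardinal.mk_Iio_ord_toType (eqW A)

def pick (S : Set (Set ℕ)) : Set ℕ :=
  if h : (R \ S).Nonempty then h.choose else ∅

lemma pick_spec {S : Set (Set ℕ)} (h : (R \ S).Nonempty) : pick S ∈ R \ S := by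
  rw [pick, dif_pos h]; exact h.choose_spec

def IsTm (G U : Set (Set ℕ)) (t : Tm) : Prop :=
  ↑t.g ⊆ G ∧ ↑t.P ⊆ R \ U ∧ ↑t.N ⊆ R \ U

def PredA (G U : Set (Set ℕ)) (A : Set ℕ) : Prop :=
  ∃ t, IsTm G U t ∧ (val t).Nonempty ∧ val t ⊆ A

def Fat (G U : Set (Set ℕ)) (A : Set ℕ) (w : Tm) : Prop :=
  ∀ t, IsTm G U t → (val t ∩ val w).Nonempty → (val t ∩ val w ∩ A).Infinite

def PredC (G U : Set (Set ℕ)) (A : Set ℕ) : Prop :=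
  ∃ w, IsTm G U w ∧ (val w).Nonempty ∧ Fat G U A w

def step (A : Set ℕ) (rec : ∀ B, rlt B A → Set ℕ × Bool × Finset (Set ℕ)) :
    Set ℕ × Bool × Finset (Set ℕ) :=
  let G : Set (Set ℕ) :=
    bG ∪ {s | ∃ B, ∃ h : rlt B A, s = (rec B h).1 ∨ s = ((rec B h).1)ᶜ}
  let U : Set (Set ℕ) := {σ | ∃ B, ∃ h : rlt B A, σ ∈ (rec B h).2.2}
  if hA : PredA G U A then
    ⟨val hA.choose, false, hA.choose.P ∪ hA.choose.N⟩
  else if hC : PredC G U A then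
    let w := hC.choose
    let x := pick (U ∪ ↑w.P ∪ ↑w.N)
    ⟨E x ∩ A ∩ val w, false, insert x (w.P ∪ w.N)⟩
  else
    ⟨E (pick U) ∪ A, true, {pick U}⟩

def stage : Set ℕ → Set ℕ × Bool × Finset (Set ℕ) := rlt_wf.fix step

def cl (A : Set ℕ) : Set ℕ := (stage A).1
def cov (A : Set ℕ) : Bool := (stage A).2.1
def usd (A : Set ℕ) : Finset (Set ℕ) := (stage A).2.2

def GA (A : Set ℕ) : Set (Set ℕ) :=
  bG ∪ {s | ∃ B, ∃ _h : rlt B A, s = cl B ∨ s = (cl B)ᶜ}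

def UA (A : Set ℕ) : Set (Set ℕ) := {σ | ∃ B, ∃ _h : rlt B A, σ ∈ usd B}

lemma stage_eq (A : Set ℕ) : stage A = step A (fun B _ => stage B) :=
  rlt_wf.fix_eq step A

/-- case analysis for a stage -/
lemma stage_cases (A : Set ℕ) :
    (∃ t, IsTm (GA A) (UA A) t ∧ (val t).Nonempty ∧ val t ⊆ A ∧
        cl A = val t ∧ cov A = false ∧ usd A = t.P ∪ t.N)
  ∨ (¬ PredA (GA A) (UA A) A ∧
      ∃ w, IsTm (GA A) (UA A) w ∧ (val w).Nonempty ∧ Fat (GA A) (UA A) A w ∧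
        ∃ x, x = pick (UA A ∪ ↑w.P ∪ ↑w.N) ∧ cl A = E x ∩ A ∩ val w ∧
          cov A = false ∧ usd A = insert x (w.P ∪ w.N))
  ∨ (¬ PredA (GA A) (UA A) A ∧ ¬ PredC (GA A) (UA A) A ∧
      cl A = E (pick (UA A)) ∪ A ∧ cov A = true ∧ usd A = {pick (UA A)}) := by
  have h := stage_eq A
  rw [step] at h
  have hG : (bG ∪ {s | ∃ B, ∃ h : rlt B A, s = ((fun B _ => stage B) B h).1 ∨
      s = (((fun B _ => stage B) B h).1)ᶜ}) = GA A := rfl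
  have hU : ({σ | ∃ B, ∃ h : rlt B A, σ ∈ ((fun B _ => stage B) B h).2.2}) = UA A := rfl
  simp only [hG, hU] at h
  split_ifs at h with hA hC
  · left
    refine ⟨hA.choose, hA.choose_spec.1, hA.choose_spec.2.1, hA.choose_spec.2.2, ?_, ?_, ?_⟩
    · exact congrArg Prod.fst h
    · exact congrArg (fun p => p.2.1) h
    · exact congrArg (fun p => p.2.2) h
  · right; left
    refine ⟨hA, hC.choose, hC.choose_spec.1, hC.choose_spec.2.1, hC.choose_spec.2.2,
      pick (UA A ∪ ↑hC.choose.P ∪ ↑hC.choose.N), rfl, ?_, ?_, ?_⟩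
    · exact congrArg Prod.fst h
    · exact congrArg (fun p => p.2.1) h
    · exact congrArg (fun p => p.2.2) h
  · right; right
    exact ⟨hA, hC, congrArg Prod.fst h, congrArg (fun p => p.2.1) h,
      congrArg (fun p => p.2.2) h⟩


-- ## Part 5 : invariants

def MIp (G U : Set (Set ℕ)) : Prop := ∀ t, IsTm G U t → (val t).Finite → val t = ∅

def TPp (G U : Set (Set ℕ)) : Prop :=
  ∀ t, IsTm G U t → Disjoint t.P t.N → (val0 t.g).Nonempty → (val t).Nonempty

def GLe (A : Set ℕ) : Set (Set ℕ) := GA A ∪ {cl A, (cl A)ᶜ}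
def ULe (A : Set ℕ) : Set (Set ℕ) := UA A ∪ ↑(usd A)

def H (A : Set ℕ) : Prop := MIp (GLe A) (ULe A) ∧ TPp (GLe A) (ULe A)

lemma val_gOnly (g : Finset (Set ℕ)) : val ⟨g, ∅, ∅⟩ = val0 g := by
  simp [val, epart]

lemma val_sub_val0 (t : Tm) : val t ⊆ val0 t.g := Set.inter_subset_left

lemma IsTm.mrg' {G U : Set (Set ℕ)} {t₁ t₂ : Tm} (h₁ : IsTm G U t₁) (h₂ : IsTm G U t₂) :
    IsTm G U (mrg t₁ t₂) := by
  obtain ⟨a1, b1, c1⟩ := h₁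
  obtain ⟨a2, b2, c2⟩ := h₂
  refine ⟨?_, ?_, ?_⟩ <;> simp only [mrg, Finset.coe_union]
  · exact Set.union_subset a1 a2
  · exact Set.union_subset b1 b2
  · exact Set.union_subset c1 c2

lemma GLe_sub {B A : Set ℕ} (h : rlt B A) : GLe B ⊆ GA A := by
  rintro s (hs | hs)
  · rcases hs with hs | ⟨B', hB', h'⟩
    · exact Or.inl hs
    · exact Or.inr ⟨B', rlt_trans hB' h, h'⟩
  · rcases hs with rfl | hs
    · exact Or.inr ⟨B, h, Or.inl rfl⟩
    · simp only [Set.mem_singleton_iff] at hs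
      exact Or.inr ⟨B, h, Or.inr hs⟩

lemma ULe_sub {B A : Set ℕ} (h : rlt B A) : ULe B ⊆ UA A := by
  rintro σ (hσ | hσ)
  · rcases hσ with ⟨B', hB', h'⟩
    exact ⟨B', rlt_trans hB' h, h'⟩
  · exact ⟨B, h, hσ⟩

/-- the language at stage A decomposes -/
lemma lang_decomp (A : Set ℕ) (g : Finset (Set ℕ)) (hg : ↑g ⊆ GA A) :
    ↑g ⊆ bG ∨ ∃ B, rlt B A ∧ ↑g ⊆ GLe B := by
  classical
  set gC : Finset (Set ℕ) := g.filter (· ∉ bG) with hgC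
  by_cases hE : gC = ∅
  · left
    intro ℓ hℓ
    by_contra hc
    have : ℓ ∈ gC := Finset.mem_filter.2 ⟨hℓ, hc⟩
    simp [hE] at this
  · right
    set F : Set ℕ → Set ℕ := fun ℓ =>
      if h : ∃ B, rlt B A ∧ (ℓ = cl B ∨ ℓ = (cl B)ᶜ) then h.choose else ∅ with hF
    have hFspec : ∀ ℓ ∈ gC, rlt (F ℓ) A ∧ (ℓ = cl (F ℓ) ∨ ℓ = (cl (F ℓ))ᶜ) := by
      intro ℓ hℓ
      have h1 : ℓ ∈ g := (Finset.mem_filter.1 hℓ).1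
      have h2 : ℓ ∉ bG := (Finset.mem_filter.1 hℓ).2
      have h3 : ∃ B, rlt B A ∧ (ℓ = cl B ∨ ℓ = (cl B)ᶜ) := by
        rcases hg h1 with h | ⟨B, hB, h⟩
        · exact absurd h h2
        · exact ⟨B, hB, h⟩
      rw [hF]; simp only
      rw [dif_pos h3]
      exact h3.choose_spec
    set Γ : Finset (Set ℕ) := gC.image F with hΓ
    have hΓne : Γ.Nonempty := Finset.image_nonempty.2 (Finset.nonempty_iff_ne_empty.2 hE)
    rcases exists_rmax Γ hΓne with ⟨Bm, hBm, hmax⟩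
    have hBmA : rlt Bm A := by
      rcases Finset.mem_image.1 hBm with ⟨ℓ, hℓ, rfl⟩
      exact (hFspec ℓ hℓ).1
    refine ⟨Bm, hBmA, fun ℓ hℓ => ?_⟩
    by_cases hb : ℓ ∈ bG
    · exact Or.inl (Or.inl hb)
    · have hℓC : ℓ ∈ gC := Finset.mem_filter.2 ⟨hℓ, hb⟩
      have hmem : F ℓ ∈ Γ := Finset.mem_image_of_mem F hℓC
      rcases hmax (F ℓ) hmem with heq | hlt
      · rcases (hFspec ℓ hℓC).2 with h | h
        · exact Or.inr (Or.inl (heq ▸ h))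
        · exact Or.inr (Or.inr (by simp only [Set.mem_singleton_iff]; exact heq ▸ h))
      · rcases (hFspec ℓ hℓC).2 with h | h
        · exact Or.inl (Or.inr ⟨F ℓ, hlt, Or.inl h⟩)
        · exact Or.inl (Or.inr ⟨F ℓ, hlt, Or.inr h⟩)

lemma not_disj_val_empty (t : Tm) (h : ¬ Disjoint t.P t.N) : val t = ∅ := by
  by_contra hc
  exact h (disj_of_nonempty t (Set.nonempty_iff_ne_empty.2 hc))

/-- the invariants in the base language -/
lemma baseH (U : Set (Set ℕ)) : MIp bG U ∧ TPp bG U := by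
  constructor
  · intro t hT hfin
    by_cases hd : Disjoint t.P t.N
    · rcases base_main t hT.1 (fun σ h => (hT.2.1 h).1) (fun σ h => (hT.2.2 h).1) hd with
        h | h
      · have : val t ⊆ val0 t.g := val_sub_val0 t
        rw [h] at this
        exact Set.subset_empty_iff.1 this
      · exact absurd hfin h
    · exact not_disj_val_empty t hd
  · intro t hT hd hne
    rcases base_main t hT.1 (fun σ h => (hT.2.1 h).1) (fun σ h => (hT.2.2 h).1) hd with
      h | h
    · exact absurd h hne.ne_empty
    · exact h.nonempty

/-- pre-stage invariants from the induction hypothesis -/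
lemma pre_of_H (A : Set ℕ) (IH : ∀ B, rlt B A → H B) :
    MIp (GA A) (UA A) ∧ TPp (GA A) (UA A) := by
  constructor
  · intro t hT hfin
    rcases lang_decomp A t.g hT.1 with h | ⟨B, hB, h⟩
    · exact (baseH (UA A)).1 t ⟨h, hT.2.1, hT.2.2⟩ hfin
    · refine (IH B hB).1 t ⟨h, ?_, ?_⟩ hfin <;>
      · intro σ hσ
        · have h2 := hT.2
          constructor
          · first
            | exact (h2.1 hσ).1
            | exact (h2.2 hσ).1
          · intro hc
            first
            | exact (h2.1 hσ).2 (ULe_sub hB hc)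
            | exact (h2.2 hσ).2 (ULe_sub hB hc)
  · intro t hT hd hne
    rcases lang_decomp A t.g hT.1 with h | ⟨B, hB, h⟩
    · exact (baseH (UA A)).2 t ⟨h, hT.2.1, hT.2.2⟩ hd hne
    · refine (IH B hB).2 t ⟨h, ?_, ?_⟩ hd hne <;>
      · intro σ hσ
        · have h2 := hT.2
          constructor
          · first
            | exact (h2.1 hσ).1
            | exact (h2.2 hσ).1
          · intro hc
            first
            | exact (h2.1 hσ).2 (ULe_sub hB hc)
            | exact (h2.2 hσ).2 (ULe_sub hB hc)


-- ## Part 6 : stage-level consequences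

lemma infinite_of_nonempty {G U : Set (Set ℕ)} (mi : MIp G U) (t : Tm)
    (hT : IsTm G U t) (hne : (val t).Nonempty) : (val t).Infinite := by
  intro hfin
  exact hne.ne_empty (mi t hT hfin)

lemma strongNotA (A : Set ℕ) (mi : MIp (GA A) (UA A))
    (hnA : ¬ PredA (GA A) (UA A) A) :
    ∀ t, IsTm (GA A) (UA A) t → (val t).Nonempty → (val t \ A).Infinite := by
  intro t hT hne
  by_contra hfin
  rw [Set.not_infinite] at hfin
  have hinf : (val t).Infinite := infinite_of_nonempty mi t hT hne
  obtain ⟨z, hz⟩ := (hinf.diff hfin).nonempty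
  have hz1 : z ∈ val t := hz.1
  have hz2 : z ∉ hfin.toFinset := by
    rw [Set.Finite.mem_toFinset]; exact hz.2
  rcases sepCombo z hfin.toFinset hz2 with ⟨gV, hgV, hzV, hVS⟩
  apply hnA
  refine ⟨mrg ⟨gV, ∅, ∅⟩ t, ?_, ⟨z, ?_⟩, ?_⟩
  · exact IsTm.mrg' ⟨fun ℓ h => Or.inl (hgV h), by simp, by simp⟩ hT
  · rw [val_mrg, val_gOnly]
    exact ⟨hzV, hz1⟩
  · intro w hw
    rw [val_mrg, val_gOnly] at hw
    by_contra hwA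
    have hwS : w ∈ (val t \ A) := ⟨hw.2, hwA⟩
    have : w ∈ val0 gV ∩ ↑hfin.toFinset := ⟨hw.1, by
      rw [Finset.mem_coe, Set.Finite.mem_toFinset]; exact hwS⟩
    rw [hVS] at this
    exact this

lemma tND (A : Set ℕ) (mi : MIp (GA A) (UA A))
    (hnC : ¬ PredC (GA A) (UA A) A) :
    ∀ m, IsTm (GA A) (UA A) m → (val m).Nonempty →
      ∃ t', IsTm (GA A) (UA A) t' ∧ (val t').Nonempty ∧ val t' ⊆ val m \ A := by
  intro m hm hne
  have hnf : ¬ Fat (GA A) (UA A) A m := fun hf => hnC ⟨m, hm, hne, hf⟩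
  rw [Fat] at hnf
  push_neg at hnf
  obtain ⟨t₂, ht₂, hne₂, hfin⟩ := hnf
  set m' : Tm := mrg t₂ m with hm'
  have hm'T : IsTm (GA A) (UA A) m' := IsTm.mrg' ht₂ hm
  have hvm' : val m' = val t₂ ∩ val m := val_mrg t₂ m
  have hne' : (val m').Nonempty := by rw [hvm']; exact hne₂
  have hfin' : (val m' ∩ A).Finite := by rw [hvm']; exact hfin
  have hinf : (val m').Infinite := infinite_of_nonempty mi m' hm'T hne'
  obtain ⟨z, hz⟩ := (hinf.diff hfin').nonempty
  have hz2 : z ∉ hfin'.toFinset := by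
    rw [Set.Finite.mem_toFinset]; exact hz.2
  rcases sepCombo z hfin'.toFinset hz2 with ⟨gV, hgV, hzV, hVS⟩
  refine ⟨mrg ⟨gV, ∅, ∅⟩ m', ?_, ⟨z, ?_⟩, ?_⟩
  · exact IsTm.mrg' ⟨fun ℓ h => Or.inl (hgV h), by simp, by simp⟩ hm'T
  · rw [val_mrg, val_gOnly]
    exact ⟨hzV, hz.1⟩
  · intro w hw
    rw [val_mrg, val_gOnly] at hw
    have hwm : w ∈ val m := by
      rw [hvm'] at hw; exact hw.2.2
    refine ⟨hwm, fun hwA => ?_⟩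
    have : w ∈ val0 gV ∩ ↑hfin'.toFinset := ⟨hw.1, by
      rw [Finset.mem_coe, Set.Finite.mem_toFinset]; exact ⟨hw.2, hwA⟩⟩
    rw [hVS] at this
    exact this


-- ## Part 7 : freshness

lemma aleph0_lt_cc : Cardinal.aleph0 < cc := by
  have h1 : cc = 2 ^ Cardinal.aleph0 := by
    rw [cc, Cardinal.mk_set, Cardinal.mk_nat]
  rw [h1]
  exact Cardinal.cantor _

lemma UA_small (A : Set ℕ) : Cardinal.mk (UA A) < cc := by
  have hsub : UA A ⊆ ⋃ B : {B : Set ℕ // rlt B A}, ↑(usd B.1) := by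
    rintro σ ⟨B, hB, hσ⟩
    exact Set.mem_iUnion.2 ⟨⟨B, hB⟩, hσ⟩
  calc Cardinal.mk (UA A) ≤ Cardinal.mk (⋃ B : {B : Set ℕ // rlt B A}, ↑(usd B.1)) :=
        Cardinal.mk_le_mk_of_subset hsub
    _ ≤ Cardinal.mk {B : Set ℕ // rlt B A} * ⨆ B : {B : Set ℕ // rlt B A},
          Cardinal.mk ↑(usd B.1) := Cardinal.mk_iUnion_le (fun B : {B : Set ℕ // rlt B A} => (↑(usd B.1) : Set (Set ℕ)))
    _ ≤ Cardinal.mk {B : Set ℕ // rlt B A} * Cardinal.aleph0 := by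
        apply mul_le_mul_right
        apply ciSup_le'
        intro B
        exact le_of_lt (Cardinal.lt_aleph0_of_finite _)
    _ < cc := Cardinal.mul_lt_of_lt (le_of_lt aleph0_lt_cc) (card_small A) aleph0_lt_cc

lemma cc_le_R : cc ≤ Cardinal.mk R := by
  have hinj : Function.Injective (fun σ : Set ℕ =>
      (⟨(· + 1) '' σ, by simp [R]⟩ : R)) := by
    intro σ σ' h
    have h2 : (· + 1) '' σ = (· + 1) '' σ' := congrArg Subtype.val h
    exact Set.image_injective.2 (add_left_injective 1) h2
  exact Cardinal.mk_le_of_injective hinj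

lemma fresh_ex (A : Set ℕ) (extra : Finset (Set ℕ)) (S : Set (Set ℕ))
    (hS : S ⊆ UA A ∪ ↑extra) : (R \ S).Nonempty := by
  rw [Set.nonempty_iff_ne_empty]
  intro hc
  have hRS : R ⊆ S := by
    intro σ hσ
    by_contra h
    exact Set.eq_empty_iff_forall_notMem.1 hc σ ⟨hσ, h⟩
  have h1 : Cardinal.mk S < cc := by
    calc Cardinal.mk S ≤ Cardinal.mk ↑(UA A ∪ ↑extra) := Cardinal.mk_le_mk_of_subset hS
      _ ≤ Cardinal.mk (UA A) + Cardinal.mk (↑extra : Set (Set ℕ)) := Cardinal.mk_union_le _ _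
      _ < cc := Cardinal.add_lt_of_lt (le_of_lt aleph0_lt_cc) (UA_small A)
          (lt_trans (Cardinal.lt_aleph0_of_finite _) aleph0_lt_cc)
  have h2 : cc ≤ Cardinal.mk S :=
    le_trans cc_le_R (Cardinal.mk_le_mk_of_subset hRS)
  exact absurd h1 (not_lt.2 h2)


-- ## Part 8 : preservation helpers

lemma GA_compl {A : Set ℕ} {ℓ : Set ℕ} (h : ℓ ∈ GA A) : ℓᶜ ∈ GA A := by
  rcases h with ⟨k, hk | hk⟩ | ⟨B, hB, hk | hk⟩
  · exact Or.inl ⟨k, Or.inr (by rw [hk])⟩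
  · exact Or.inl ⟨k, Or.inl (by rw [hk, compl_compl])⟩
  · exact Or.inr ⟨B, hB, Or.inr (by rw [hk])⟩
  · exact Or.inr ⟨B, hB, Or.inl (by rw [hk, compl_compl])⟩

lemma val_sub_P {t : Tm} {σ : Set ℕ} (h : σ ∈ t.P) : val t ⊆ E σ := by
  intro z hz
  have := hz.2.1
  simp only [Set.mem_iInter] at this
  exact this σ h

lemma val_sub_N {t : Tm} {σ : Set ℕ} (h : σ ∈ t.N) : val t ⊆ (E σ)ᶜ := by
  intro z hz
  have := hz.2.2
  simp only [Set.mem_iInter] at this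
  exact this σ h

lemma miss_val {z : ℕ} (t : Tm) (h : z ∉ val t) :
    (∃ ℓ ∈ t.g, z ∉ ℓ) ∨ (∃ σ ∈ t.P, z ∉ E σ) ∨ (∃ σ ∈ t.N, z ∈ E σ) := by
  by_contra hc
  push_neg at hc
  obtain ⟨h1, h2, h3⟩ := hc
  refine h ⟨?_, ?_, ?_⟩
  · simp only [val0, Set.mem_iInter]; exact h1
  · simp only [Set.mem_iInter]; exact h2
  · simp only [Set.mem_iInter, Set.mem_compl_iff]; exact h3

lemma usd_avoid {A : Set ℕ} {t : Tm} (hT : IsTm (GLe A) (ULe A) t) :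
    ∀ σ ∈ (usd A : Finset (Set ℕ)), σ ∉ t.P ∧ σ ∉ t.N := by
  intro σ hσ
  constructor
  · intro hc
    exact (hT.2.1 hc).2 (Or.inr hσ)
  · intro hc
    exact (hT.2.2 hc).2 (Or.inr hσ)

lemma IsTm_of_le {A : Set ℕ} {t : Tm} (hg : ↑t.g ⊆ GA A)
    (hT : IsTm (GLe A) (ULe A) t) : IsTm (GA A) (UA A) t := by
  refine ⟨hg, ?_, ?_⟩
  · intro σ hσ
    exact ⟨(hT.2.1 hσ).1, fun hc => (hT.2.1 hσ).2 (Or.inl hc)⟩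
  · intro σ hσ
    exact ⟨(hT.2.2 hσ).1, fun hc => (hT.2.2 hσ).2 (Or.inl hc)⟩

/-- splitting a term of the extended language -/
lemma tm_split (A : Set ℕ) (t : Tm) (hT : IsTm (GLe A) (ULe A) t) :
    ∃ s : Tm, IsTm (GA A) (UA A) s ∧ s.P = t.P ∧ s.N = t.N ∧
    ((val t = val s ∧ val0 t.g = val0 s.g) ∨
     ((val t = cl A ∩ val s ∧ val0 t.g = cl A ∩ val0 s.g) ∨
      (val t = (cl A)ᶜ ∩ val s ∧ val0 t.g = (cl A)ᶜ ∩ val0 s.g)) ∨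
     (cl A ∈ t.g ∧ (cl A)ᶜ ∈ t.g)) := by
  classical
  set c := cl A with hc
  set g₀ : Finset (Set ℕ) := (t.g.erase c).erase cᶜ with hg₀
  set s : Tm := ⟨g₀, t.P, t.N⟩ with hs
  have hsT : IsTm (GA A) (UA A) s := by
    refine IsTm_of_le ?_ ⟨?_, hT.2.1, hT.2.2⟩
    · intro ℓ hℓ
      have h1 : ℓ ∈ t.g := Finset.mem_of_mem_erase (Finset.mem_of_mem_erase hℓ)
      have h2 : ℓ ≠ cᶜ := Finset.ne_of_mem_erase hℓ
      have h3 : ℓ ≠ c := Finset.ne_of_mem_erase (Finset.mem_of_mem_erase hℓ)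
      rcases hT.1 h1 with h | h
      · exact h
      · rcases h with h | h
        · exact absurd h h3
        · exact absurd h h2
    · intro ℓ hℓ
      exact hT.1 (Finset.mem_of_mem_erase (Finset.mem_of_mem_erase hℓ))
  by_cases h1 : c ∈ t.g <;> by_cases h2 : cᶜ ∈ t.g
  · exact ⟨s, hsT, rfl, rfl, Or.inr (Or.inr ⟨h1, h2⟩)⟩
  · -- c ∈, cᶜ ∉
    have he : t.g = insert c g₀ := by
      rw [hg₀, Finset.erase_eq_of_notMem (by
        intro hcc
        exact h2 (Finset.mem_of_mem_erase hcc)), Finset.insert_erase h1]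
    refine ⟨s, hsT, rfl, rfl, Or.inr (Or.inl (Or.inl ⟨?_, ?_⟩))⟩
    · have : t = ⟨insert c g₀, t.P, t.N⟩ := by
        cases t; simp only at he ⊢; rw [he]
      rw [this, val_insertG]
    · rw [he, val0_insert]
  · -- cᶜ ∈, c ∉
    have he : t.g = insert cᶜ g₀ := by
      rw [hg₀, Finset.erase_eq_of_notMem h1, Finset.insert_erase h2]
    refine ⟨s, hsT, rfl, rfl, Or.inr (Or.inl (Or.inr ⟨?_, ?_⟩))⟩
    · have : t = ⟨insert cᶜ g₀, t.P, t.N⟩ := by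
        cases t; simp only at he ⊢; rw [he]
      rw [this, val_insertG]
    · rw [he, val0_insert]
  · have he : g₀ = t.g := by
      rw [hg₀, Finset.erase_eq_of_notMem h1, Finset.erase_eq_of_notMem h2]
    refine ⟨s, hsT, rfl, rfl, Or.inl ⟨?_, ?_⟩⟩
    · have ht : t = s := by
        cases t
        simp only [hs]
        rw [he]
      rw [ht]
    · show val0 t.g = val0 g₀
      rw [he]


-- ## Part 9 : branch A

lemma insert_sub_GA {A : Set ℕ} {ℓ : Set ℕ} {g : Finset (Set ℕ)}
    (hℓ : ℓ ∈ GA A) (hg : ↑g ⊆ GA A) : ↑(insert ℓ g) ⊆ GA A := by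
  intro x hx
  rcases Finset.mem_insert.1 hx with rfl | hx
  · exact hℓ
  · exact hg hx

lemma val_insertG' (s : Tm) (ℓ : Set ℕ) :
    val ⟨insert ℓ s.g, s.P, s.N⟩ = ℓ ∩ val s := by
  have := val_insertG s.g s.P s.N ℓ
  cases s
  exact this

lemma val_insertP' (s : Tm) (σ : Set ℕ) :
    val ⟨s.g, insert σ s.P, s.N⟩ = E σ ∩ val s := by
  have := val_insertP s.g s.P s.N σ
  cases s
  exact this

lemma val_insertN' (s : Tm) (σ : Set ℕ) :
    val ⟨s.g, s.P, insert σ s.N⟩ = (E σ)ᶜ ∩ val s := by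
  have := val_insertN s.g s.P s.N σ
  cases s
  exact this

lemma branchA_H (A : Set ℕ) (mi : MIp (GA A) (UA A)) (tp : TPp (GA A) (UA A))
    (tw : Tm) (htw : IsTm (GA A) (UA A) tw) (hne : (val tw).Nonempty)
    (hcl : cl A = val tw) (husd : (usd A : Finset (Set ℕ)) = tw.P ∪ tw.N) : H A := by
  classical
  have hdw : Disjoint tw.P tw.N := disj_of_nonempty tw hne
  have hcsub : ∀ ℓ ∈ tw.g, cl A ⊆ ℓ := by
    intro ℓ hℓ
    rw [hcl]
    exact fun z hz => val0_mono hℓ (val_sub_val0 tw hz)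
  have hcsubP : ∀ σ ∈ tw.P, cl A ⊆ E σ := fun σ hσ => hcl ▸ val_sub_P hσ
  have hcsubN : ∀ σ ∈ tw.N, cl A ⊆ (E σ)ᶜ := fun σ hσ => hcl ▸ val_sub_N hσ
  constructor
  · -- MI
    intro t hT hfin
    obtain ⟨s, hsT, hsP, hsN, hcase⟩ := tm_split A t hT
    have hav := usd_avoid hT
    rcases hcase with ⟨hv, _⟩ | hcase | ⟨h1, h2⟩
    · rw [hv] at hfin ⊢
      exact mi s hsT hfin
    · rcases hcase with ⟨hv, _⟩ | ⟨hv, _⟩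
      · have he : val t = val (mrg s tw) := by
          rw [val_mrg, hv, hcl, Set.inter_comm]
        rw [he] at hfin ⊢
        exact mi _ (IsTm.mrg' hsT htw) hfin
      · apply Set.eq_empty_iff_forall_notMem.2
        intro z hz
        have hzs : z ∈ val s := (hv ▸ hz).2
        have hznc : z ∉ cl A := (hv ▸ hz).1
        rw [hcl] at hznc
        rcases miss_val tw hznc with ⟨ℓ, hℓ, hzℓ⟩ | ⟨σ, hσ, hzσ⟩ | ⟨σ, hσ, hzσ⟩
        · set p : Tm := ⟨insert ℓᶜ s.g, s.P, s.N⟩ with hp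
          have hvp : val p = ℓᶜ ∩ val s := val_insertG' s ℓᶜ
          have hpT : IsTm (GA A) (UA A) p :=
            ⟨insert_sub_GA (GA_compl (htw.1 hℓ)) hsT.1, hsT.2.1, hsT.2.2⟩
          have hpsub : val p ⊆ val t := by
            rw [hvp, hv]
            exact Set.inter_subset_inter_left _ (Set.compl_subset_compl.2 (hcsub ℓ hℓ))
          have := mi p hpT (hfin.subset hpsub)
          rw [this] at hpsub
          exact (Set.eq_empty_iff_forall_notMem.1 this z) (by rw [hvp]; exact ⟨hzℓ, hzs⟩)
        · set p : Tm := ⟨s.g, s.P, insert σ s.N⟩ with hp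
          have hvp : val p = (E σ)ᶜ ∩ val s := val_insertN' s σ
          have hpT : IsTm (GA A) (UA A) p := by
            refine ⟨hsT.1, hsT.2.1, ?_⟩
            intro σ' hσ'
            rcases Finset.mem_insert.1 hσ' with rfl | hσ'
            · exact htw.2.1 hσ
            · exact hsT.2.2 hσ'
          have hpsub : val p ⊆ val t := by
            rw [hvp, hv]
            exact Set.inter_subset_inter_left _ (Set.compl_subset_compl.2 (hcsubP σ hσ))
          have := mi p hpT (hfin.subset hpsub)
          exact (Set.eq_empty_iff_forall_notMem.1 this z) (by rw [hvp]; exact ⟨hzσ, hzs⟩)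
        · set p : Tm := ⟨s.g, insert σ s.P, s.N⟩ with hp
          have hvp : val p = E σ ∩ val s := val_insertP' s σ
          have hpT : IsTm (GA A) (UA A) p := by
            refine ⟨hsT.1, ?_, hsT.2.2⟩
            intro σ' hσ'
            rcases Finset.mem_insert.1 hσ' with rfl | hσ'
            · exact htw.2.2 hσ
            · exact hsT.2.1 hσ'
          have hpsub : val p ⊆ val t := by
            rw [hvp, hv]
            apply Set.inter_subset_inter_left
            intro y hy hyc
            exact (hcsubN σ hσ) hyc hy
          have := mi p hpT (hfin.subset hpsub)
          exact (Set.eq_empty_iff_forall_notMem.1 this z) (by rw [hvp]; exact ⟨hzσ, hzs⟩)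
    · have : val t ⊆ ∅ := by
        intro z hz
        exact (val0_mono h2 (val_sub_val0 t hz)) (val0_mono h1 (val_sub_val0 t hz))
      exact Set.subset_empty_iff.1 this
  · -- TP
    intro t hT hd hne0
    obtain ⟨s, hsT, hsP, hsN, hcase⟩ := tm_split A t hT
    have hav := usd_avoid hT
    have hdP : ∀ σ ∈ tw.P ∪ tw.N, σ ∉ t.P ∧ σ ∉ t.N := by
      intro σ hσ
      exact hav σ (husd ▸ hσ)
    rcases hcase with ⟨hv, hv0⟩ | hcase | ⟨h1, h2⟩
    · rw [hv]
      apply tp s hsT (by rw [hsP, hsN]; exact hd)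
      rw [← hv0]
      exact hne0
    · rcases hcase with ⟨hv, hv0⟩ | ⟨hv, hv0⟩
      · -- positive occurrence
        have he : val t = val (mrg s tw) := by
          rw [val_mrg, hv, hcl, Set.inter_comm]
        rw [he]
        apply tp _ (IsTm.mrg' hsT htw)
        · -- disjointness of (P ∪ Pw) (N ∪ Nw)
          show Disjoint (s.P ∪ tw.P) (s.N ∪ tw.N)
          rw [Finset.disjoint_union_left, Finset.disjoint_union_right,
            Finset.disjoint_union_right]
          refine ⟨⟨by rw [hsP, hsN]; exact hd, ?_⟩, ?_, hdw⟩
          · rw [Finset.disjoint_right]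
            intro σ hσN hσP
            exact (hdP σ (Finset.mem_union_right _ hσN)).1 (hsP ▸ hσP)
          · rw [Finset.disjoint_left]
            intro σ hσP hσN
            exact (hdP σ (Finset.mem_union_left _ hσP)).2 (hsN ▸ hσN)
        · -- val0 nonempty
          show (val0 (s.g ∪ tw.g)).Nonempty
          rcases hne0 with ⟨z, hz⟩
          rw [hv0] at hz
          refine ⟨z, ?_⟩
          simp only [val0, Set.mem_iInter, Finset.mem_union]
          intro ℓ hℓ
          rcases hℓ with hℓ | hℓ
          · exact val0_mono hℓ hz.2
          · exact hcsub ℓ hℓ hz.1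
      · -- negative occurrence
        rcases hne0 with ⟨z, hz⟩
        rw [hv0] at hz
        have hznc : z ∉ cl A := hz.1
        rw [hcl] at hznc
        rw [hv]
        rcases miss_val tw hznc with ⟨ℓ, hℓ, hzℓ⟩ | ⟨σ, hσ, hzσ⟩ | ⟨σ, hσ, hzσ⟩
        · set p : Tm := ⟨insert ℓᶜ s.g, s.P, s.N⟩ with hp
          have hpT : IsTm (GA A) (UA A) p :=
            ⟨insert_sub_GA (GA_compl (htw.1 hℓ)) hsT.1, hsT.2.1, hsT.2.2⟩
          have hne' : (val p).Nonempty := by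
            apply tp p hpT (by show Disjoint s.P s.N; rw [hsP, hsN]; exact hd)
            refine ⟨z, ?_⟩
            show z ∈ val0 (insert ℓᶜ s.g)
            rw [val0_insert]
            exact ⟨hzℓ, hz.2⟩
          obtain ⟨y, hy⟩ := hne'
          rw [val_insertG'] at hy
          exact ⟨y, fun hc => hy.1 (hcsub ℓ hℓ hc), hy.2⟩
        · set p : Tm := ⟨s.g, s.P, insert σ s.N⟩ with hp
          have hpT : IsTm (GA A) (UA A) p := by
            refine ⟨hsT.1, hsT.2.1, ?_⟩
            intro σ' hσ'
            rcases Finset.mem_insert.1 hσ' with rfl | hσ'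
            · exact htw.2.1 hσ
            · exact hsT.2.2 hσ'
          have hne' : (val p).Nonempty := by
            apply tp p hpT
            · show Disjoint s.P (insert σ s.N)
              rw [Finset.disjoint_insert_right]
              exact ⟨fun hc => (hdP σ (Finset.mem_union_left _ hσ)).1 (hsP ▸ hc),
                by rw [hsP, hsN]; exact hd⟩
            · exact ⟨z, hz.2⟩
          obtain ⟨y, hy⟩ := hne'
          rw [val_insertN'] at hy
          exact ⟨y, fun hc => hy.1 (hcsubP σ hσ hc), hy.2⟩
        · set p : Tm := ⟨s.g, insert σ s.P, s.N⟩ with hp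
          have hpT : IsTm (GA A) (UA A) p := by
            refine ⟨hsT.1, ?_, hsT.2.2⟩
            intro σ' hσ'
            rcases Finset.mem_insert.1 hσ' with rfl | hσ'
            · exact htw.2.2 hσ
            · exact hsT.2.1 hσ'
          have hne' : (val p).Nonempty := by
            apply tp p hpT
            · show Disjoint (insert σ s.P) s.N
              rw [Finset.disjoint_insert_left]
              exact ⟨fun hc => (hdP σ (Finset.mem_union_right _ hσ)).2 (hsN ▸ hc),
                by rw [hsP, hsN]; exact hd⟩
            · exact ⟨z, hz.2⟩
          obtain ⟨y, hy⟩ := hne'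
          rw [val_insertP'] at hy
          exact ⟨y, fun hc => (hcsubN σ hσ) hc hy.1, hy.2⟩
    · rcases hne0 with ⟨z, hz⟩
      exact absurd (val0_mono h1 hz) (by
        intro hc
        exact (val0_mono h2 hz) hc)


-- ## Part 10 : branch C

lemma branchC_H (A : Set ℕ) (mi : MIp (GA A) (UA A)) (tp : TPp (GA A) (UA A))
    (hnA : ¬ PredA (GA A) (UA A) A)
    (w : Tm) (hw : IsTm (GA A) (UA A) w) (hwne : (val w).Nonempty)
    (hfat : Fat (GA A) (UA A) A w)
    (x : Set ℕ) (hx : x ∈ R \ (UA A ∪ ↑w.P ∪ ↑w.N))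
    (hcl : cl A = E x ∩ A ∩ val w)
    (husd : (usd A : Finset (Set ℕ)) = insert x (w.P ∪ w.N)) : H A := by
  classical
  have sNA := strongNotA A mi hnA
  have hdw : Disjoint w.P w.N := disj_of_nonempty w hwne
  have hxR : x ∈ R \ UA A := ⟨hx.1, fun hc => hx.2 (Or.inl (Or.inl hc))⟩
  have hxwP : x ∉ w.P := fun hc => hx.2 (Or.inl (Or.inr hc))
  have hxwN : x ∉ w.N := fun hc => hx.2 (Or.inr hc)
  constructor
  · -- MI
    intro t hT hfin
    obtain ⟨s, hsT, hsP, hsN, hcase⟩ := tm_split A t hT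
    have hav := usd_avoid hT
    have hxs : x ∉ s.P ∧ x ∉ s.N := by
      have := hav x (husd ▸ Finset.mem_insert_self _ _)
      rw [← hsP, ← hsN] at this
      exact this
    -- the key merged term
    set m' : Tm := ⟨s.g ∪ w.g, insert x (s.P ∪ w.P), s.N ∪ w.N⟩ with hm'
    have hm'T : IsTm (GA A) (UA A) m' := by
      have hmm := IsTm.mrg' hsT hw
      refine ⟨hmm.1, ?_, hmm.2.2⟩
      intro σ hσ
      rcases Finset.mem_insert.1 hσ with rfl | hσ
      · exact hxR
      · exact hmm.2.1 hσ
    have hvm' : val m' = E x ∩ (val s ∩ val w) := by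
      have h1 : val m' = E x ∩ val (mrg s w) := val_insertP' (mrg s w) x
      rw [h1, val_mrg]
    rcases hcase with ⟨hv, _⟩ | hcase | ⟨h1, h2⟩
    · rw [hv] at hfin ⊢
      exact mi s hsT hfin
    · rcases hcase with ⟨hv, _⟩ | ⟨hv, _⟩
      · -- positive : val t = (E x ∩ A ∩ val w) ∩ val s = val m' ∩ A
        have he : val t = val m' ∩ A := by
          rw [hv, hcl, hvm']
          ext z
          simp only [Set.mem_inter_iff]
          tauto
        rw [he] at hfin ⊢
        by_cases hc : (val m').Nonempty
        · exfalso
          have hsubw : val m' ⊆ val w := by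
            rw [hvm']; exact fun y hy => hy.2.2
          have := hfat m' hm'T (by
            rw [Set.inter_eq_self_of_subset_left hsubw]; exact hc)
          rw [Set.inter_eq_self_of_subset_left hsubw] at this
          exact this hfin
        · rw [Set.not_nonempty_iff_eq_empty.1 hc]
          simp
      · -- negative : val t = (E x ∩ A ∩ val w)ᶜ ∩ val s
        rw [hcl] at hv
        apply Set.eq_empty_iff_forall_notMem.2
        intro z hz
        have hzs : z ∈ val s := (hv ▸ hz).2
        have hznc : z ∉ E x ∩ A ∩ val w := (hv ▸ hz).1
        -- find the piece containing z
        by_cases hzx : z ∈ E x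
        · by_cases hzw : z ∈ val w
          · -- z ∉ A : piece val m' \ A
            have hzA : z ∉ A := fun hc => hznc ⟨⟨hzx, hc⟩, hzw⟩
            have hzm : z ∈ val m' := by
              rw [hvm']; exact ⟨hzx, hzs, hzw⟩
            have hpsub : val m' \ A ⊆ val t := by
              rw [hv]
              rintro y ⟨hy1, hy2⟩
              rw [hvm'] at hy1
              exact ⟨fun hc => hy2 hc.1.2, hy1.2.1⟩
            by_cases hme : (val m').Nonempty
            · exact absurd (hfin.subset hpsub) (sNA m' hm'T hme)
            · exact (Set.not_nonempty_iff_eq_empty.1 hme ▸ hzm : z ∈ (∅ : Set ℕ))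
          · -- z misses a literal of w
            rcases miss_val w hzw with ⟨ℓ, hℓ, hzℓ⟩ | ⟨σ, hσ, hzσ⟩ | ⟨σ, hσ, hzσ⟩
            · set p : Tm := ⟨insert ℓᶜ s.g, insert x s.P, s.N⟩ with hp
              have hpT : IsTm (GA A) (UA A) p := by
                refine ⟨insert_sub_GA (GA_compl (hw.1 hℓ)) hsT.1, ?_, hsT.2.2⟩
                intro σ' hσ'
                rcases Finset.mem_insert.1 hσ' with rfl | hσ'
                · exact hxR
                · exact hsT.2.1 hσ'
              have hvp : val p = ℓᶜ ∩ (E x ∩ val s) := by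
                have e1 : val p = E x ∩ val ⟨insert ℓᶜ s.g, s.P, s.N⟩ :=
                  val_insertP' ⟨insert ℓᶜ s.g, s.P, s.N⟩ x
                rw [e1, val_insertG']
                ext y; simp only [Set.mem_inter_iff]; tauto
              have hpsub : val p ⊆ val t := by
                rw [hvp, hv]
                rintro y ⟨hy1, hy2, hy3⟩
                exact ⟨fun hc => hy1 (val0_mono hℓ (val_sub_val0 w hc.2)), hy3⟩
              have := mi p hpT (hfin.subset hpsub)
              exact Set.eq_empty_iff_forall_notMem.1 this z
                (by rw [hvp]; exact ⟨hzℓ, hzx, hzs⟩)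
            · set p : Tm := ⟨s.g, insert x s.P, insert σ s.N⟩ with hp
              have hpT : IsTm (GA A) (UA A) p := by
                refine ⟨hsT.1, ?_, ?_⟩
                · intro σ' hσ'
                  rcases Finset.mem_insert.1 hσ' with rfl | hσ'
                  · exact hxR
                  · exact hsT.2.1 hσ'
                · intro σ' hσ'
                  rcases Finset.mem_insert.1 hσ' with rfl | hσ'
                  · exact hw.2.1 hσ
                  · exact hsT.2.2 hσ'
              have hvp : val p = (E σ)ᶜ ∩ (E x ∩ val s) := by
                have e1 : val p = E x ∩ val ⟨s.g, s.P, insert σ s.N⟩ :=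
                  val_insertP' ⟨s.g, s.P, insert σ s.N⟩ x
                rw [e1, val_insertN']
                ext y; simp only [Set.mem_inter_iff]; tauto
              have hpsub : val p ⊆ val t := by
                rw [hvp, hv]
                rintro y ⟨hy1, hy2, hy3⟩
                exact ⟨fun hc => hy1 (val_sub_P hσ hc.2), hy3⟩
              have := mi p hpT (hfin.subset hpsub)
              exact Set.eq_empty_iff_forall_notMem.1 this z
                (by rw [hvp]; exact ⟨hzσ, hzx, hzs⟩)
            · set p : Tm := ⟨s.g, insert σ (insert x s.P), s.N⟩ with hp
              have hpT : IsTm (GA A) (UA A) p := by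
                refine ⟨hsT.1, ?_, hsT.2.2⟩
                intro σ' hσ'
                rcases Finset.mem_insert.1 hσ' with rfl | hσ'
                · exact hw.2.2 hσ
                · rcases Finset.mem_insert.1 hσ' with rfl | hσ'
                  · exact hxR
                  · exact hsT.2.1 hσ'
              have hvp : val p = E σ ∩ (E x ∩ val s) := by
                have e1 : val p = E σ ∩ val ⟨s.g, insert x s.P, s.N⟩ :=
                  val_insertP' ⟨s.g, insert x s.P, s.N⟩ σ
                rw [e1, val_insertP']
              have hpsub : val p ⊆ val t := by
                rw [hvp, hv]
                rintro y ⟨hy1, hy2, hy3⟩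
                exact ⟨fun hc => (val_sub_N hσ hc.2) hy1, hy3⟩
              have := mi p hpT (hfin.subset hpsub)
              exact Set.eq_empty_iff_forall_notMem.1 this z
                (by rw [hvp]; exact ⟨hzσ, hzx, hzs⟩)
        · -- z ∉ E x : piece (E x)ᶜ ∩ val s
          set p : Tm := ⟨s.g, s.P, insert x s.N⟩ with hp
          have hpT : IsTm (GA A) (UA A) p := by
            refine ⟨hsT.1, hsT.2.1, ?_⟩
            intro σ' hσ'
            rcases Finset.mem_insert.1 hσ' with rfl | hσ'
            · exact hxR
            · exact hsT.2.2 hσ'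
          have hvp : val p = (E x)ᶜ ∩ val s := val_insertN' s x
          have hpsub : val p ⊆ val t := by
            rw [hvp, hv]
            rintro y ⟨hy1, hy2⟩
            exact ⟨fun hc => hy1 hc.1.1, hy2⟩
          have := mi p hpT (hfin.subset hpsub)
          exact Set.eq_empty_iff_forall_notMem.1 this z
            (by rw [hvp]; exact ⟨hzx, hzs⟩)
    · have : val t ⊆ ∅ := fun z hz =>
        (val0_mono h2 (val_sub_val0 t hz)) (val0_mono h1 (val_sub_val0 t hz))
      exact Set.subset_empty_iff.1 this
  · -- TP
    intro t hT hd hne0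
    obtain ⟨s, hsT, hsP, hsN, hcase⟩ := tm_split A t hT
    have hav := usd_avoid hT
    have hxs : x ∉ s.P ∧ x ∉ s.N := by
      have := hav x (husd ▸ Finset.mem_insert_self _ _)
      rw [← hsP, ← hsN] at this
      exact this
    have hcross : ∀ σ ∈ w.P ∪ w.N, σ ∉ s.P ∧ σ ∉ s.N := by
      intro σ hσ
      have := hav σ (husd ▸ Finset.mem_insert_of_mem hσ)
      rw [← hsP, ← hsN] at this
      exact this
    rcases hcase with ⟨hv, hv0⟩ | hcase | ⟨h1, h2⟩
    · rw [hv]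
      exact tp s hsT (by rw [hsP, hsN]; exact hd) (hv0 ▸ hne0)
    · rcases hcase with ⟨hv, hv0⟩ | ⟨hv, hv0⟩
      · -- positive
        rcases hne0 with ⟨z, hz⟩
        rw [hv0, hcl] at hz
        set m' : Tm := ⟨s.g ∪ w.g, insert x (s.P ∪ w.P), s.N ∪ w.N⟩ with hm'
        have hm'T : IsTm (GA A) (UA A) m' := by
          have hmm := IsTm.mrg' hsT hw
          refine ⟨hmm.1, ?_, hmm.2.2⟩
          intro σ hσ
          rcases Finset.mem_insert.1 hσ with rfl | hσ
          · exact hxR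
          · exact hmm.2.1 hσ
        have hvm' : val m' = E x ∩ (val s ∩ val w) := by
          have h1 : val m' = E x ∩ val (mrg s w) := val_insertP' (mrg s w) x
          rw [h1, val_mrg]
        have hm'ne : (val m').Nonempty := by
          apply tp m' hm'T
          · show Disjoint (insert x (s.P ∪ w.P)) (s.N ∪ w.N)
            rw [Finset.disjoint_insert_left, Finset.disjoint_union_left,
              Finset.disjoint_union_right, Finset.disjoint_union_right]
            refine ⟨?_, ⟨by rw [hsP, hsN]; exact hd, ?_⟩, ?_, hdw⟩
            · rw [Finset.mem_union]
              push_neg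
              exact ⟨hxs.2, hxwN⟩
            · rw [Finset.disjoint_right]
              intro σ hσ hc
              exact (hcross σ (Finset.mem_union_right _ hσ)).1 hc
            · rw [Finset.disjoint_left]
              intro σ hσ hc
              exact (hcross σ (Finset.mem_union_left _ hσ)).2 hc
          · refine ⟨z, ?_⟩
            show z ∈ val0 (s.g ∪ w.g)
            simp only [val0, Set.mem_iInter, Finset.mem_union]
            intro ℓ hℓ
            rcases hℓ with hℓ | hℓ
            · exact val0_mono hℓ hz.2
            · exact val0_mono hℓ (val_sub_val0 w hz.1.2)
        have hinf := hfat m' hm'T (by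
          refine Set.Nonempty.mono ?_ hm'ne
          rw [hvm']
          intro y hy
          exact ⟨hy, hy.2.2⟩)
        rcases hinf.nonempty with ⟨y, hy⟩
        refine ⟨y, ?_⟩
        rw [hv, hcl]
        rw [hvm'] at hy
        exact ⟨⟨⟨hy.1.1.1, hy.2⟩, hy.1.1.2.2⟩, hy.1.1.2.1⟩
      · -- negative : unconditional via (E x)ᶜ
        rcases hne0 with ⟨z, hz⟩
        rw [hv0] at hz
        set p : Tm := ⟨s.g, s.P, insert x s.N⟩ with hp
        have hpT : IsTm (GA A) (UA A) p := by
          refine ⟨hsT.1, hsT.2.1, ?_⟩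
          intro σ' hσ'
          rcases Finset.mem_insert.1 hσ' with rfl | hσ'
          · exact hxR
          · exact hsT.2.2 hσ'
        have hne' : (val p).Nonempty := by
          apply tp p hpT
          · show Disjoint s.P (insert x s.N)
            rw [Finset.disjoint_insert_right]
            exact ⟨hxs.1, by rw [hsP, hsN]; exact hd⟩
          · exact ⟨z, hz.2⟩
        obtain ⟨y, hy⟩ := hne'
        rw [val_insertN'] at hy
        refine ⟨y, ?_⟩
        rw [hv, hcl]
        exact ⟨fun hc => hy.1 hc.1.1, hy.2⟩
    · rcases hne0 with ⟨z, hz⟩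
      exact absurd (val0_mono h1 hz) (fun hc => (val0_mono h2 hz) hc)


-- ## Part 11 : branch B

lemma branchB_H (A : Set ℕ) (mi : MIp (GA A) (UA A)) (tp : TPp (GA A) (UA A))
    (hnA : ¬ PredA (GA A) (UA A) A) (hnC : ¬ PredC (GA A) (UA A) A)
    (x : Set ℕ) (hxR : x ∈ R \ UA A)
    (hcl : cl A = E x ∪ A)
    (husd : (usd A : Finset (Set ℕ)) = {x}) : H A := by
  classical
  have tnd := tND A mi hnC
  have valm_eq : ∀ s : Tm, val ⟨s.g, s.P, insert x s.N⟩ = (E x)ᶜ ∩ val s :=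
    fun s => val_insertN' s x
  have valq_eq : ∀ s : Tm, val ⟨s.g, insert x s.P, s.N⟩ = E x ∩ val s :=
    fun s => val_insertP' s x
  constructor
  · -- MI
    intro t hT hfin
    obtain ⟨s, hsT, hsP, hsN, hcase⟩ := tm_split A t hT
    have hav := usd_avoid hT
    have hxs : x ∉ s.P ∧ x ∉ s.N := by
      have := hav x (husd ▸ Finset.mem_singleton_self x)
      rw [← hsP, ← hsN] at this
      exact this
    rcases hcase with ⟨hv, _⟩ | hcase | ⟨h1, h2⟩
    · rw [hv] at hfin ⊢
      exact mi s hsT hfin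
    · rcases hcase with ⟨hv, _⟩ | ⟨hv, _⟩
      · -- positive : val t = (E x ∪ A) ∩ val s
        rw [hcl] at hv
        by_cases hds : Disjoint s.P s.N
        · by_cases hne0 : (val0 s.g).Nonempty
          · exfalso
            set q : Tm := ⟨s.g, insert x s.P, s.N⟩ with hq
            have hqT : IsTm (GA A) (UA A) q := by
              refine ⟨hsT.1, ?_, hsT.2.2⟩
              intro σ hσ
              rcases Finset.mem_insert.1 hσ with rfl | hσ
              · exact hxR
              · exact hsT.2.1 hσ
            have hqne : (val q).Nonempty := by
              apply tp q hqT
              · show Disjoint (insert x s.P) s.N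
                rw [Finset.disjoint_insert_left]
                exact ⟨hxs.2, hds⟩
              · exact hne0
            have hqsub : val q ⊆ val t := by
              rw [valq_eq, hv]
              exact fun y hy => ⟨Or.inl hy.1, hy.2⟩
            have := mi q hqT (hfin.subset hqsub)
            exact hqne.ne_empty this
          · rw [Set.not_nonempty_iff_eq_empty] at hne0
            have : val t ⊆ ∅ := by
              rw [hv]
              intro y hy
              exact hne0 ▸ (val_sub_val0 s hy.2)
            exact Set.subset_empty_iff.1 this
        · have hvs : val s = ∅ := not_disj_val_empty s hds
          rw [hv, hvs]
          exact Set.inter_empty _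
      · -- negative : val t = (E x ∪ A)ᶜ ∩ val s
        rw [hcl] at hv
        set m : Tm := ⟨s.g, s.P, insert x s.N⟩ with hm
        have hmT : IsTm (GA A) (UA A) m := by
          refine ⟨hsT.1, hsT.2.1, ?_⟩
          intro σ hσ
          rcases Finset.mem_insert.1 hσ with rfl | hσ
          · exact hxR
          · exact hsT.2.2 hσ
        by_cases hmne : (val m).Nonempty
        · exfalso
          obtain ⟨t', ht'T, ht'ne, ht'sub⟩ := tnd m hmT hmne
          have ht'inf := infinite_of_nonempty mi t' ht'T ht'ne
          apply ht'inf
          apply hfin.subset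
          intro y hy
          have := ht'sub hy
          rw [valm_eq] at this
          rw [hv]
          rw [Set.compl_union]
          exact ⟨⟨this.1.1, this.2⟩, this.1.2⟩
        · rw [Set.not_nonempty_iff_eq_empty] at hmne
          have : val t ⊆ ∅ := by
            rw [hv, Set.compl_union]
            intro y hy
            rw [← hmne, valm_eq]
            exact ⟨hy.1.1, hy.2⟩
          exact Set.subset_empty_iff.1 this
    · have : val t ⊆ ∅ := fun z hz =>
        (val0_mono h2 (val_sub_val0 t hz)) (val0_mono h1 (val_sub_val0 t hz))
      exact Set.subset_empty_iff.1 this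
  · -- TP
    intro t hT hd hne0
    obtain ⟨s, hsT, hsP, hsN, hcase⟩ := tm_split A t hT
    have hav := usd_avoid hT
    have hxs : x ∉ s.P ∧ x ∉ s.N := by
      have := hav x (husd ▸ Finset.mem_singleton_self x)
      rw [← hsP, ← hsN] at this
      exact this
    rcases hcase with ⟨hv, hv0⟩ | hcase | ⟨h1, h2⟩
    · rw [hv]
      exact tp s hsT (by rw [hsP, hsN]; exact hd) (hv0 ▸ hne0)
    · rcases hcase with ⟨hv, hv0⟩ | ⟨hv, hv0⟩
      · -- positive
        rcases hne0 with ⟨z, hz⟩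
        rw [hv0] at hz
        set q : Tm := ⟨s.g, insert x s.P, s.N⟩ with hq
        have hqT : IsTm (GA A) (UA A) q := by
          refine ⟨hsT.1, ?_, hsT.2.2⟩
          intro σ hσ
          rcases Finset.mem_insert.1 hσ with rfl | hσ
          · exact hxR
          · exact hsT.2.1 hσ
        have hqne : (val q).Nonempty := by
          apply tp q hqT
          · show Disjoint (insert x s.P) s.N
            rw [Finset.disjoint_insert_left]
            exact ⟨hxs.2, by rw [hsP, hsN]; exact hd⟩
          · exact ⟨z, hz.2⟩
        obtain ⟨y, hy⟩ := hqne
        rw [valq_eq] at hy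
        refine ⟨y, ?_⟩
        rw [hv, hcl]
        exact ⟨Or.inl hy.1, hy.2⟩
      · -- negative
        rcases hne0 with ⟨z, hz⟩
        rw [hv0] at hz
        set m : Tm := ⟨s.g, s.P, insert x s.N⟩ with hm
        have hmT : IsTm (GA A) (UA A) m := by
          refine ⟨hsT.1, hsT.2.1, ?_⟩
          intro σ hσ
          rcases Finset.mem_insert.1 hσ with rfl | hσ
          · exact hxR
          · exact hsT.2.2 hσ
        have hmne : (val m).Nonempty := by
          apply tp m hmT
          · show Disjoint s.P (insert x s.N)
            rw [Finset.disjoint_insert_right]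
            exact ⟨hxs.1, by rw [hsP, hsN]; exact hd⟩
          · exact ⟨z, hz.2⟩
        obtain ⟨t', ht'T, ht'ne, ht'sub⟩ := tnd m hmT hmne
        obtain ⟨y, hy⟩ := ht'ne
        have := ht'sub hy
        rw [valm_eq] at this
        refine ⟨y, ?_⟩
        rw [hv, hcl, Set.compl_union]
        exact ⟨⟨this.1.1, this.2⟩, this.1.2⟩
    · rcases hne0 with ⟨z, hz⟩
      exact absurd (val0_mono h1 hz) (fun hc => (val0_mono h2 hz) hc)


-- ## Part 12 : the induction

lemma H_all : ∀ A, H A := by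
  intro A
  induction A using rlt_wf.induction with
  | _ A IH =>
  obtain ⟨miA, tpA⟩ := pre_of_H A IH
  rcases stage_cases A with ⟨t, hT, hne, hsub, hcl, hcov, husd⟩ |
    ⟨hnA, w, hwT, hwne, hfat, x, hxdef, hcl, hcov, husd⟩ |
    ⟨hnA, hnC, hcl, hcov, husd⟩
  · exact branchA_H A miA tpA t hT hne hcl husd
  · have hxspec : x ∈ R \ (UA A ∪ ↑w.P ∪ ↑w.N) := by
      rw [hxdef]
      apply pick_spec
      apply fresh_ex A (w.P ∪ w.N)
      intro σ hσ
      rcases hσ with (hσ | hσ) | hσ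
      · exact Or.inl hσ
      · exact Or.inr (by simp only [Finset.coe_union, Set.mem_union]; exact Or.inl hσ)
      · exact Or.inr (by simp only [Finset.coe_union, Set.mem_union]; exact Or.inr hσ)
    exact branchC_H A miA tpA hnA w hwT hwne hfat x hxspec hcl husd
  · have hxspec : pick (UA A) ∈ R \ UA A :=
      pick_spec (fresh_ex A ∅ (UA A) (by simp))
    exact branchB_H A miA tpA hnA hnC _ hxspec hcl husd

lemma pre_all (A : Set ℕ) : MIp (GA A) (UA A) ∧ TPp (GA A) (UA A) :=
  pre_of_H A (fun B _ => H_all B)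

lemma val0_image_compl (Γ : Finset (Set ℕ)) :
    val0 (Γ.image (fun B => (cl B)ᶜ)) = ⋂ B ∈ Γ, (cl B)ᶜ := by
  ext z
  simp only [val0, Set.mem_iInter, Finset.mem_image]
  constructor
  · intro h B hB
    exact h _ ⟨B, hB, rfl⟩
  · rintro h ℓ ⟨B, hB, rfl⟩
    exact h B hB

lemma FIPa : ∀ A, ∀ Γ : Finset (Set ℕ),
    (∀ B ∈ Γ, cov B = true ∧ (rlt B A ∨ B = A)) → (⋂ B ∈ Γ, (cl B)ᶜ).Nonempty := by
  intro A
  induction A using rlt_wf.induction with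
  | _ A IH =>
  intro Γ hΓ
  classical
  by_cases hAΓ : A ∈ Γ
  · obtain ⟨miA, tpA⟩ := pre_all A
    have hcovA : cov A = true := (hΓ A hAΓ).1
    rcases stage_cases A with ⟨t, hT, hne, hsub, hcl, hcov, husd⟩ |
      ⟨hnA, w, hwT, hwne, hfat, x, hxdef, hcl, hcov, husd⟩ |
      ⟨hnA, hnC, hcl, hcov, husd⟩
    · rw [hcov] at hcovA; exact absurd hcovA (by simp)
    · rw [hcov] at hcovA; exact absurd hcovA (by simp)
    · set x := pick (UA A) with hxdef
      have hxspec : x ∈ R \ UA A :=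
        pick_spec (fresh_ex A ∅ (UA A) (by simp))
      set Γ' := Γ.erase A with hΓ'
      have hW : (⋂ B ∈ Γ', (cl B)ᶜ).Nonempty := by
        rcases Finset.eq_empty_or_nonempty Γ' with he | hne
        · rw [he]; simp
        · rcases exists_rmax Γ' hne with ⟨Bm, hBm, hmax⟩
          have hBmA : rlt Bm A := by
            rcases (hΓ Bm (Finset.mem_of_mem_erase hBm)).2 with h | h
            · exact h
            · rw [h] at hBm
              exact absurd hBm (Finset.notMem_erase A Γ)
          apply IH Bm hBmA Γ'
          intro B hB
          refine ⟨(hΓ B (Finset.mem_of_mem_erase hB)).1, ?_⟩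
          rcases hmax B hB with h | h
          · exact Or.inr h
          · exact Or.inl h
      set m : Tm := ⟨Γ'.image (fun B => (cl B)ᶜ), ∅, {x}⟩ with hm
      have hmT : IsTm (GA A) (UA A) m := by
        refine ⟨?_, by simp [hm], ?_⟩
        · intro ℓ hℓ
          rw [Finset.coe_image] at hℓ
          rcases hℓ with ⟨B, hB, rfl⟩
          have hBA : rlt B A := by
            rcases (hΓ B (Finset.mem_of_mem_erase hB)).2 with h | h
            · exact h
            · rw [h] at hB
              exact absurd hB (Finset.notMem_erase A Γ)
          exact Or.inr ⟨B, hBA, Or.inr rfl⟩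
        · intro σ hσ
          rcases Finset.mem_coe.1 hσ with h
          rw [Finset.mem_singleton] at h
          rw [h]
          exact hxspec
      have hmval : val m = (⋂ B ∈ Γ', (cl B)ᶜ) ∩ (E x)ᶜ := by
        have h1 : val m = (E x)ᶜ ∩ val ⟨Γ'.image (fun B => (cl B)ᶜ), ∅, ∅⟩ :=
          val_insertN' ⟨Γ'.image (fun B => (cl B)ᶜ), ∅, ∅⟩ x
        rw [h1, val_gOnly, val0_image_compl, Set.inter_comm]
      have hmne : (val m).Nonempty := by
        apply tpA m hmT (by simp [hm])
        show (val0 (Γ'.image (fun B => (cl B)ᶜ))).Nonempty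
        rw [val0_image_compl]
        exact hW
      obtain ⟨t', ht'T, ht'ne, ht'sub⟩ := tND A miA hnC m hmT hmne
      obtain ⟨y, hy⟩ := ht'ne
      have hym := ht'sub hy
      rw [hmval] at hym
      refine ⟨y, ?_⟩
      simp only [Set.mem_iInter, Set.mem_compl_iff]
      intro B hB
      by_cases hBA : B = A
      · rw [hBA, hcl]
        rintro (h | h)
        · exact hym.1.2 h
        · exact hym.2 h
      · have : y ∈ ⋂ B ∈ Γ', (cl B)ᶜ := hym.1.1
        simp only [Set.mem_iInter, Set.mem_compl_iff] at this
        exact this B (Finset.mem_erase.2 ⟨hBA, hB⟩)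
  · rcases Finset.eq_empty_or_nonempty Γ with he | hne
    · rw [he]; simp
    · rcases exists_rmax Γ hne with ⟨Bm, hBm, hmax⟩
      have hBmA : rlt Bm A := by
        rcases (hΓ Bm hBm).2 with h | h
        · exact h
        · exact absurd (h ▸ hBm) hAΓ
      apply IH Bm hBmA Γ
      intro B hB
      refine ⟨(hΓ B hB).1, ?_⟩
      rcases hmax B hB with h | h
      · exact Or.inr h
      · exact Or.inl h

lemma FIP_all (Γ : Finset (Set ℕ)) (hΓ : ∀ B ∈ Γ, cov B = true) :
    (⋂ B ∈ Γ, (cl B)ᶜ).Nonempty := by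
  rcases Finset.eq_empty_or_nonempty Γ with he | hne
  · rw [he]; simp
  · rcases exists_rmax Γ hne with ⟨Bm, hBm, hmax⟩
    apply FIPa Bm Γ
    intro B hB
    refine ⟨hΓ B hB, ?_⟩
    rcases hmax B hB with h | h
    · exact Or.inr h
    · exact Or.inl h


-- ## Part 13 : the space

def subb : Set (Set ℕ) := bG ∪ {s | ∃ B : Set ℕ, s = cl B ∨ s = (cl B)ᶜ}

def τ : TopologicalSpace ℕ := TopologicalSpace.generateFrom subb

lemma noMaxW : NoMaxOrder W := by
  have hlim : Order.IsSuccLimit cc.ord := Cardinal.isSuccLimit_ord (le_of_lt aleph0_lt_cc)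
  exact Ordinal.toType_noMax_of_succ_lt (fun a ha => hlim.succ_lt ha)

/-- strict upper bounds for finite sets of stages -/
lemma exists_above (Γ : Finset (Set ℕ)) : ∃ A, ∀ B ∈ Γ, rlt B A := by
  rcases Finset.eq_empty_or_nonempty Γ with he | hne
  · exact ⟨∅, by rw [he]; simp⟩
  · rcases exists_rmax Γ hne with ⟨Bm, hBm, hmax⟩
    have := noMaxW
    obtain ⟨y, hy⟩ := this.exists_gt (eqW Bm)
    refine ⟨eqW.symm y, ?_⟩
    intro B hB
    have h1 : rlt Bm (eqW.symm y) := by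
      show eqW Bm < eqW (eqW.symm y)
      rwa [Equiv.apply_symm_apply]
    rcases hmax B hB with h | h
    · exact h ▸ h1
    · exact rlt_trans h h1

lemma subb_sub_GA (g : Finset (Set ℕ)) (hg : ↑g ⊆ subb) : ∃ A, ↑g ⊆ GA A := by
  classical
  set F : Set ℕ → Set ℕ := fun ℓ =>
    if h : ∃ B : Set ℕ, ℓ = cl B ∨ ℓ = (cl B)ᶜ then h.choose else ∅ with hF
  obtain ⟨A, hA⟩ := exists_above (g.image F)
  refine ⟨A, fun ℓ hℓ => ?_⟩
  rcases hg hℓ with h | ⟨B, hB⟩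
  · exact Or.inl h
  · have hex : ∃ B : Set ℕ, ℓ = cl B ∨ ℓ = (cl B)ᶜ := ⟨B, hB⟩
    have hspec : ℓ = cl (F ℓ) ∨ ℓ = (cl (F ℓ))ᶜ := by
      rw [hF]; simp only
      rw [dif_pos hex]
      exact hex.choose_spec
    have hmem : F ℓ ∈ g.image F := Finset.mem_image_of_mem F (Finset.mem_coe.1 hℓ)
    exact Or.inr ⟨F ℓ, hA _ hmem, hspec⟩

/-- global MI : every nonempty basic set is infinite -/
lemma global_MI (g : Finset (Set ℕ)) (hg : ↑g ⊆ subb) (hfin : (val0 g).Finite) :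
    val0 g = ∅ := by
  obtain ⟨A, hA⟩ := subb_sub_GA g hg
  have := (pre_all A).1 ⟨g, ∅, ∅⟩ ⟨hA, by simp, by simp⟩ (by rwa [val_gOnly])
  rwa [val_gOnly] at this

lemma subb_compl {ℓ : Set ℕ} (h : ℓ ∈ subb) : ℓᶜ ∈ subb := by
  rcases h with ⟨k, hk | hk⟩ | ⟨B, hB | hB⟩
  · exact Or.inl ⟨k, Or.inr (by rw [hk])⟩
  · exact Or.inl ⟨k, Or.inl (by rw [hk, compl_compl])⟩
  · exact Or.inr ⟨B, Or.inr (by rw [hB])⟩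
  · exact Or.inr ⟨B, Or.inl (by rw [hB, compl_compl])⟩

lemma subb_open {ℓ : Set ℕ} (h : ℓ ∈ subb) : @IsOpen ℕ τ ℓ :=
  TopologicalSpace.GenerateOpen.basic ℓ h

lemma subb_clopen {ℓ : Set ℕ} (h : ℓ ∈ subb) : @IsClopen ℕ τ ℓ := by
  letI := τ
  constructor
  · rw [← isOpen_compl_iff]
    exact subb_open (subb_compl h)
  · exact subb_open h

lemma basis_τ : @TopologicalSpace.IsTopologicalBasis ℕ τ
    ((fun f => ⋂₀ f) '' {f : Set (Set ℕ) | f.Finite ∧ f ⊆ subb}) :=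
  @TopologicalSpace.isTopologicalBasis_of_subbasis ℕ τ subb rfl

lemma sInter_eq_val0 (f : Set (Set ℕ)) (hf : f.Finite) :
    ⋂₀ f = val0 hf.toFinset := by
  ext z
  simp only [Set.mem_sInter, val0, Set.mem_iInter, Set.Finite.mem_toFinset]

lemma basic_clopen (f : Set (Set ℕ)) (hf : f.Finite) (hsub : f ⊆ subb) :
    @IsClopen ℕ τ (⋂₀ f) := by
  rw [Set.sInter_eq_biInter]
  exact @Set.Finite.isClopen_biInter ℕ τ _ _ hf _ (fun ℓ hℓ => subb_clopen (hsub hℓ))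

/-- crowdedness -/
lemma crowded_τ : ∀ n : ℕ, ¬ @IsOpen ℕ τ {n} := by
  letI := τ
  intro n hopen
  obtain ⟨t, ⟨f, ⟨hfin, hfsub⟩, rfl⟩, hnt, hsub⟩ :=
    basis_τ.isOpen_iff.1 hopen n rfl
  have hnt2 : n ∈ ⋂₀ f := hnt
  have hsub2 : ⋂₀ f ⊆ {n} := hsub
  have h1 : (⋂₀ f).Finite := (Set.finite_singleton n).subset hsub2
  rw [sInter_eq_val0 f hfin] at h1 hnt2
  have := global_MI hfin.toFinset (by
    intro ℓ hℓ
    rw [Finset.mem_coe, Set.Finite.mem_toFinset] at hℓ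
    exact hfsub hℓ) h1
  rw [this] at hnt2
  exact hnt2

/-- T2 -/
lemma t2_τ : @T2Space ℕ τ := by
  letI := τ
  refine T2Space.mk ?_
  intro n m hnm
  obtain ⟨k, hn, hm⟩ := sep n m hnm
  refine ⟨D k, (D k)ᶜ, ?_, ?_, hn, hm, disjoint_compl_right⟩
  · exact (subb_clopen (Or.inl ⟨k, Or.inl rfl⟩)).2
  · exact (subb_clopen (subb_compl (Or.inl ⟨k, Or.inl rfl⟩))).2

/-- zero-dimensionality -/
lemma zd_τ : @TopologicalSpace.IsTopologicalBasis ℕ τ {s : Set ℕ | @IsClopen ℕ τ s} := by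
  letI := τ
  refine TopologicalSpace.isTopologicalBasis_of_isOpen_of_nhds ?_ ?_
  · intro u hu
    exact hu.2
  · intro a u hau hu
    obtain ⟨t, ⟨f, ⟨hfin, hfsub⟩, rfl⟩, hat, hsub⟩ :=
      basis_τ.isOpen_iff.1 hu a hau
    exact ⟨⋂₀ f, basic_clopen f hfin hfsub, hat, hsub⟩


-- ## Part 14 : the filter

def Fil : Set (Set ℕ) :=
  {s | @IsClosed ℕ τ s ∧ ∃ Γ : Finset (Set ℕ), (∀ B ∈ Γ, cov B = true) ∧
    (⋂ B ∈ Γ, (cl B)ᶜ) ⊆ s}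

lemma univ_mem_Fil : Set.univ ∈ Fil := by
  letI := τ
  exact ⟨isClosed_univ, ∅, by simp, by simp⟩

lemma Fil_closed_nonempty : ∀ s ∈ Fil, @IsClosed ℕ τ s ∧ s.Nonempty := by
  rintro s ⟨hcl, Γ, hΓ, hsub⟩
  exact ⟨hcl, (FIP_all Γ hΓ).mono hsub⟩

lemma Fil_inter : ∀ s ∈ Fil, ∀ t ∈ Fil, s ∩ t ∈ Fil := by
  letI := τ
  rintro s ⟨hs, Γ₁, hΓ₁, hsub₁⟩ t ⟨ht, Γ₂, hΓ₂, hsub₂⟩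
  refine ⟨hs.inter ht, Γ₁ ∪ Γ₂, ?_, ?_⟩
  · intro B hB
    rcases Finset.mem_union.1 hB with h | h
    · exact hΓ₁ B h
    · exact hΓ₂ B h
  · intro z hz
    simp only [Set.mem_iInter] at hz
    constructor
    · apply hsub₁
      simp only [Set.mem_iInter]
      intro B hB
      exact hz B (Finset.mem_union_left _ hB)
    · apply hsub₂
      simp only [Set.mem_iInter]
      intro B hB
      exact hz B (Finset.mem_union_right _ hB)

lemma Fil_superset : ∀ s ∈ Fil, ∀ t : Set ℕ, s ⊆ t → @IsClosed ℕ τ t → t ∈ Fil := by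
  rintro s ⟨hs, Γ, hΓ, hsub⟩ t hst ht
  exact ⟨ht, Γ, hΓ, hsub.trans hst⟩

lemma cl_open (A : Set ℕ) : @IsOpen ℕ τ (cl A) :=
  subb_open (Or.inr ⟨A, Or.inl rfl⟩)

/-- remoteness -/
lemma Fil_remote : ∀ A : Set ℕ, @interior ℕ τ A = ∅ → ∃ F' ∈ Fil, F' ∩ A = ∅ := by
  letI := τ
  intro A hint
  obtain ⟨miA, tpA⟩ := pre_all A
  rcases stage_cases A with ⟨t, hT, hne, hsub, hcl, hcov, husd⟩ |
    ⟨hnA, w, hwT, hwne, hfat, x, hxdef, hcl, hcov, husd⟩ |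
    ⟨hnA, hnC, hcl, hcov, husd⟩
  · exfalso
    have hopen : IsOpen (val t) := hcl ▸ cl_open A
    have h1 : val t ⊆ interior A := interior_maximal hsub hopen
    rw [hint] at h1
    exact hne.ne_empty (Set.subset_empty_iff.1 h1)
  · exfalso
    have hxspec : x ∈ R \ (UA A ∪ ↑w.P ∪ ↑w.N) := by
      rw [hxdef]
      apply pick_spec
      apply fresh_ex A (w.P ∪ w.N)
      intro σ hσ
      rcases hσ with (hσ | hσ) | hσ
      · exact Or.inl hσ
      · exact Or.inr (by simp only [Finset.coe_union, Set.mem_union]; exact Or.inl hσ)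
      · exact Or.inr (by simp only [Finset.coe_union, Set.mem_union]; exact Or.inr hσ)
    have hxR : x ∈ R \ UA A := ⟨hxspec.1, fun hc => hxspec.2 (Or.inl (Or.inl hc))⟩
    set t₂ : Tm := ⟨w.g, insert x w.P, w.N⟩ with ht₂
    have ht₂T : IsTm (GA A) (UA A) t₂ := by
      refine ⟨hwT.1, ?_, hwT.2.2⟩
      intro σ hσ
      rcases Finset.mem_insert.1 hσ with rfl | hσ
      · exact hxR
      · exact hwT.2.1 hσ
    have hvt₂ : val t₂ = E x ∩ val w := val_insertP' w x
    have ht₂ne : (val t₂).Nonempty := by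
      apply tpA t₂ ht₂T
      · show Disjoint (insert x w.P) w.N
        rw [Finset.disjoint_insert_left]
        exact ⟨fun hc => hxspec.2 (Or.inr hc), disj_of_nonempty w hwne⟩
      · exact hwne.mono (val_sub_val0 w)
    have hsubw : val t₂ ⊆ val w := by
      rw [hvt₂]; exact Set.inter_subset_right
    have hinf := hfat t₂ ht₂T (by
      rw [Set.inter_eq_self_of_subset_left hsubw]; exact ht₂ne)
    rw [Set.inter_eq_self_of_subset_left hsubw] at hinf
    obtain ⟨y, hy⟩ := hinf.nonempty
    have hyA : y ∈ cl A := by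
      rw [hcl]
      rw [hvt₂] at hy
      exact ⟨⟨hy.1.1, hy.2⟩, hy.1.2⟩
    have h1 : cl A ⊆ interior A := by
      apply interior_maximal _ (cl_open A)
      rw [hcl]
      intro z hz
      exact hz.1.2
    rw [hint] at h1
    exact h1 hyA
  · refine ⟨(cl A)ᶜ, ⟨?_, {A}, ?_, ?_⟩, ?_⟩
    · exact ⟨by rw [compl_compl]; exact cl_open A⟩
    · intro B hB
      rw [Finset.mem_singleton] at hB
      rw [hB]
      exact hcov
    · intro z hz
      simp only [Set.mem_iInter] at hz
      exact hz A (Finset.mem_singleton_self A)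
    · apply Set.eq_empty_iff_forall_notMem.2
      rintro y ⟨hy1, hy2⟩
      exact hy1 (hcl ▸ Or.inr hy2)

end SRF

/-- There is a crowded Hausdorff zerodimensional topology on ω with a strongly remote
closed filter. -/
theorem exists_strongly_remote_filter :
    ∃ (τ : TopologicalSpace ℕ) (F : Set (Set ℕ)),
      (∀ x : ℕ, ¬ @IsOpen ℕ τ {x}) ∧
      (@T2Space ℕ τ) ∧
      (@TopologicalSpace.IsTopologicalBasis ℕ τ {s : Set ℕ | @IsClopen ℕ τ s}) ∧
      F.Nonempty ∧
      (∀ s ∈ F, @IsClosed ℕ τ s ∧ s.Nonempty) ∧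
      (∀ s ∈ F, ∀ t ∈ F, s ∩ t ∈ F) ∧
      (∀ s ∈ F, ∀ t : Set ℕ, s ⊆ t → @IsClosed ℕ τ t → t ∈ F) ∧
      (∀ A : Set ℕ, @interior ℕ τ A = ∅ → ∃ F' ∈ F, F' ∩ A = ∅) :=
  ⟨SRF.τ, SRF.Fil, SRF.crowded_τ, SRF.t2_τ, SRF.zd_τ, ⟨Set.univ, SRF.univ_mem_Fil⟩,
    SRF.Fil_closed_nonempty, SRF.Fil_inter, SRF.Fil_superset, SRF.Fil_remote⟩
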